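/- Let Q⁽¹⁾,…,Q⁽ᴷ⁾ be ℓ×ℓ real symmetric positive definite matrices and λ > 0. Then over all ℓ×ℓ real symmetric positive definite matrices M, the objective J(M) := λ·KL(I, M) + Σ_{k=1}^{K} KL(Q⁽ᵏ⁾, M) attains its unique global minimum at M = (1/(λ+K))·(Σ_{k=1}^{K} Q⁽ᵏ⁾ + λ·I). -/

import Mathlib

open Matrix Real

/-- The matrix Kullback–Leibler divergence
`KL(Q, M) := (1/2)[Tr(M⁻¹Q) + log det M − log det Q − ℓ]`. -/
noncomputable def matKL {l : ℕ} (Q M : Matrix (Fin l) (Fin l) ℝ) : ℝ :=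
  (1 / 2) * ((M⁻¹ * Q).trace + Real.log M.det - Real.log Q.det - l)

section auxKL

variable {l : ℕ}

lemma myPosDef_smul {A : Matrix (Fin l) (Fin l) ℝ} (hA : A.PosDef) {c : ℝ} (hc : 0 < c) :
    (c • A).PosDef := by
  refine Matrix.PosDef.of_dotProduct_mulVec_pos ?_ (fun x hx => ?_)
  · unfold Matrix.IsHermitian
    rw [conjTranspose_smul, hA.1.eq]
    simp
  · rw [smul_mulVec, dotProduct_smul]
    exact mul_pos hc (hA.dotProduct_mulVec_pos hx)

lemma myPosDef_conj {A B : Matrix (Fin l) (Fin l) ℝ} (hA : A.PosDef)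
    (hB : IsUnit B.det) : (Bᴴ * A * B).PosDef := by
  have hAt : Aᵀ = A := by rw [← Matrix.conjTranspose_eq_transpose_of_trivial]; exact hA.1
  refine Matrix.PosDef.of_dotProduct_mulVec_pos ?_ (fun x hx => ?_)
  · unfold Matrix.IsHermitian
    simp [conjTranspose_mul, Matrix.mul_assoc, hAt]
  · have hBx : B *ᵥ x ≠ 0 := by
      intro h
      exact hx <| (Matrix.mulVec_injective_iff_isUnit.mpr
        (isUnit_iff_isUnit_det _ |>.2 hB)).eq_iff.mp (by simpa using h)
    have key : star x ⬝ᵥ (Bᴴ * A * B) *ᵥ x = star (B *ᵥ x) ⬝ᵥ A *ᵥ (B *ᵥ x) := by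
      rw [star_mulVec, ← mulVec_mulVec, ← mulVec_mulVec, Matrix.dotProduct_mulVec]
    rw [key]
    exact hA.dotProduct_mulVec_pos hBx

open scoped MatrixOrder in
lemma matKL_key {A B : Matrix (Fin l) (Fin l) ℝ} (hA : A.PosDef) (hB : B.PosDef) :
    0 ≤ matKL A B ∧ (matKL A B = 0 → A = B) := by
  classical
  set S := CFC.sqrt B with hSdef
  have hS : S.PosSemidef := Matrix.nonneg_iff_posSemidef.mp (CFC.sqrt_nonneg B)
  have hSS : S * S = B := CFC.sqrt_mul_sqrt_self B hB.posSemidef.nonneg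
  have hdetS : IsUnit S.det := by
    have h1 : S.det * S.det = B.det := by rw [← det_mul, hSS]
    have h2 : S.det ≠ 0 := by
      intro h; rw [h, mul_zero] at h1; exact hB.det_pos.ne' h1.symm
    exact h2.isUnit
  have hTd : IsUnit (S⁻¹).det := by
    rw [Matrix.det_nonsing_inv, Ring.inverse_eq_inv']
    exact (inv_ne_zero hdetS.ne_zero).isUnit
  have hTh : (S⁻¹)ᴴ = S⁻¹ := hS.1.inv
  set C := S⁻¹ * A * S⁻¹ with hCdef
  have hC : C.PosDef := by
    have := myPosDef_conj hA hTd
    rwa [hTh] at this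
  have hBinv : B⁻¹ = S⁻¹ * S⁻¹ := by rw [← hSS, Matrix.mul_inv_rev]
  have htr : (B⁻¹ * A).trace = C.trace := by
    rw [hBinv]; exact (trace_mul_cycle S⁻¹ A S⁻¹).symm
  have hdetC : C.det = A.det * (B.det)⁻¹ := by
    have hBi : (B⁻¹).det = (B.det)⁻¹ := by
      rw [Matrix.det_nonsing_inv, Ring.inverse_eq_inv']
    calc C.det = (S⁻¹ * S⁻¹).det * A.det := by
          rw [hCdef, det_mul, det_mul, det_mul]; ring
      _ = A.det * (B.det)⁻¹ := by rw [← hBinv, hBi]; ring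
  have hlogC : Real.log C.det = Real.log A.det - Real.log B.det := by
    rw [hdetC, Real.log_mul hA.det_pos.ne' (inv_ne_zero hB.det_pos.ne'), Real.log_inv]
    ring
  have hKL : matKL A B = (1/2) * (C.trace - Real.log C.det - l) := by
    rw [matKL, htr]
    rw [hlogC]
    ring
  set μ := hC.1.eigenvalues with hμdef
  have hμpos : ∀ i, 0 < μ i := fun i => hC.eigenvalues_pos i
  have htrC : C.trace = ∑ i, μ i := by
    conv_lhs => rw [hC.1.spectral_theorem]
    rw [Unitary.conjStarAlgAut_apply, trace_mul_cycle, Matrix.mem_unitaryGroup_iff'.mp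
      (hC.1.eigenvectorUnitary).2, one_mul, trace_diagonal]
    simp
    rfl
  have hdetCe : C.det = ∏ i, μ i := by
    simpa using hC.1.det_eq_prod_eigenvalues
  have hlogCe : Real.log C.det = ∑ i, Real.log (μ i) := by
    rw [hdetCe]
    exact Real.log_prod (fun i _ => (hμpos i).ne')
  have hKL2 : matKL A B = (1/2) * ∑ i, (μ i - Real.log (μ i) - 1) := by
    rw [hKL, htrC, hlogCe, Finset.sum_sub_distrib, Finset.sum_sub_distrib,
      Finset.sum_const, Finset.card_univ, Fintype.card_fin, nsmul_eq_mul, mul_one]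
  have hterm : ∀ i : Fin l, 0 ≤ μ i - Real.log (μ i) - 1 := fun i => by
    have := Real.log_le_sub_one_of_pos (hμpos i); linarith
  constructor
  · rw [hKL2]
    have : (0:ℝ) ≤ ∑ i, (μ i - Real.log (μ i) - 1) :=
      Finset.sum_nonneg fun i _ => hterm i
    linarith
  · intro h0
    rw [hKL2] at h0
    have hsum0 : ∑ i, (μ i - Real.log (μ i) - 1) = 0 := by linarith
    have hμ1 : ∀ i, μ i = 1 := by
      intro i
      have := (Finset.sum_eq_zero_iff_of_nonneg (fun i _ => hterm i)).mp hsum0 i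
        (Finset.mem_univ i)
      by_contra hne
      have := Real.log_lt_sub_one_of_pos (hμpos i) hne
      linarith
    have hCone : C = 1 := by
      have hsp := hC.1.spectral_theorem
      have hd : Matrix.diagonal (RCLike.ofReal ∘ μ) = (1 : Matrix (Fin l) (Fin l) ℝ) := by
        rw [show (RCLike.ofReal ∘ μ : Fin l → ℝ) = fun _ => 1 from funext fun i => by
          simp [hμ1 i]]
        exact Matrix.diagonal_one
      rw [hsp, hd, Unitary.conjStarAlgAut_apply, mul_one, Matrix.mem_unitaryGroup_iff.mp (hC.1.eigenvectorUnitary).2]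
    have hfin : S * C * S = S * 1 * S := by rw [hCone]
    rw [mul_one, hSS] at hfin
    calc A = (S * S⁻¹) * A * (S⁻¹ * S) := by
          rw [Matrix.mul_nonsing_inv _ hdetS, Matrix.nonsing_inv_mul _ hdetS, one_mul, mul_one]
      _ = S * (S⁻¹ * A * S⁻¹) * S := by simp only [Matrix.mul_assoc]
      _ = B := hfin

lemma matKL_self {X : Matrix (Fin l) (Fin l) ℝ} (hX : X.PosDef) : matKL X X = 0 := by
  rw [matKL, Matrix.nonsing_inv_mul _ hX.det_pos.ne'.isUnit, trace_one]
  simp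

end auxKL

theorem stmt9 {l K : ℕ} (Q : Fin K → Matrix (Fin l) (Fin l) ℝ)
    (hQ : ∀ k, (Q k).PosDef) (lam : ℝ) (hlam : 0 < lam)
    (Mstar : Matrix (Fin l) (Fin l) ℝ)
    (hMstar : Mstar = (1 / (lam + K)) • (∑ k, Q k + lam • (1 : Matrix (Fin l) (Fin l) ℝ))) :
    ∀ M : Matrix (Fin l) (Fin l) ℝ, M.PosDef →
      (lam * matKL (1 : Matrix (Fin l) (Fin l) ℝ) Mstar + ∑ k, matKL (Q k) Mstar
          ≤ lam * matKL (1 : Matrix (Fin l) (Fin l) ℝ) M + ∑ k, matKL (Q k) M)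
      ∧ (lam * matKL (1 : Matrix (Fin l) (Fin l) ℝ) M + ∑ k, matKL (Q k) M
            = lam * matKL (1 : Matrix (Fin l) (Fin l) ℝ) Mstar + ∑ k, matKL (Q k) Mstar
          → M = Mstar) := by
  have hK : (0:ℝ) < lam + K := by positivity
  have hsumQ : (∑ k, Q k : Matrix (Fin l) (Fin l) ℝ).PosSemidef :=
    Finset.sum_induction Q (fun A => A.PosSemidef) (fun a b ha hb => ha.add hb)
      Matrix.PosSemidef.zero (fun k _ => (hQ k).posSemidef)
  have hMpos : Mstar.PosDef := by
    rw [hMstar]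
    exact myPosDef_smul (Matrix.PosDef.posSemidef_add hsumQ
      (myPosDef_smul Matrix.PosDef.one hlam)) (by positivity)
  have main : ∀ N : Matrix (Fin l) (Fin l) ℝ, N.PosDef →
      lam * matKL 1 N + ∑ k, matKL (Q k) N
        = (lam + K) * matKL Mstar N
          + (1/2) * ((lam + K) * Real.log Mstar.det - ∑ k, Real.log (Q k).det) := by
    intro N hN
    have hsmul : (lam + (K:ℝ)) • Mstar = ∑ k, Q k + lam • (1 : Matrix (Fin l) (Fin l) ℝ) := by
      rw [hMstar, smul_smul, mul_one_div, div_self hK.ne', one_smul]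
    have htr : (lam + (K:ℝ)) * (N⁻¹ * Mstar).trace
        = (∑ k, (N⁻¹ * Q k).trace) + lam * N⁻¹.trace := by
      have hexp : N⁻¹ * ((lam + (K:ℝ)) • Mstar)
          = (∑ k, N⁻¹ * Q k) + lam • N⁻¹ := by
        rw [hsmul, Matrix.mul_add, Finset.mul_sum, Matrix.mul_smul, Matrix.mul_one]
      calc (lam + (K:ℝ)) * (N⁻¹ * Mstar).trace
          = (N⁻¹ * ((lam + (K:ℝ)) • Mstar)).trace := by
            rw [Matrix.mul_smul, trace_smul, smul_eq_mul]
        _ = _ := by rw [hexp, trace_add, trace_sum, trace_smul, smul_eq_mul]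
    have hexp2 : ∑ k, matKL (Q k) N
        = (1/2) * ((∑ k, (N⁻¹ * Q k).trace) + K * Real.log N.det
            - (∑ k, Real.log (Q k).det) - K * l) := by
      simp only [matKL]
      rw [← Finset.mul_sum]
      congr 1
      rw [Finset.sum_sub_distrib, Finset.sum_sub_distrib, Finset.sum_add_distrib,
        Finset.sum_const, Finset.sum_const, Finset.card_univ, Fintype.card_fin,
        nsmul_eq_mul, nsmul_eq_mul]
    rw [hexp2]
    simp only [matKL, det_one, Real.log_one, Matrix.mul_one]
    linear_combination (-1/2) * htr
  have hself : matKL Mstar Mstar = 0 := matKL_self hMpos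
  intro M hM
  have hkey := matKL_key hMpos hM
  constructor
  · rw [main M hM, main Mstar hMpos, hself]
    have := mul_nonneg hK.le hkey.1
    linarith
  · intro heq
    rw [main M hM, main Mstar hMpos, hself] at heq
    have h0 : matKL Mstar M = 0 := by
      have : (lam + K) * matKL Mstar M = 0 := by linarith
      exact (mul_eq_zero.mp this).resolve_left hK.ne'
    exact (hkey.2 h0).symm
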